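/- Suppose Bernoulli random variables φ₁,...,φₙ are obtained by applying a uniformly random permutation π to fixed {0,1} values (i.e., φ_k = b_{π_k} for a fixed binary vector b with Σb_i/n ≤ α). Then the sequence φ₁,...,φₙ is exchangeable, and P(∃ k : (1/k)·Σ_{i=1}^{k} φᵢ ≥ 1/2) ≤ 2α. -/

import Mathlib

open MeasureTheory
open scoped Classical ENNReal

open Set ProbabilityTheory MeasureTheory
open scoped ENNReal

namespace Ballot

/-- The set of nonempty lists of integers which suffix has positive sum. -/
def staysPositive : Set (List ℤ) :=
  {l | ∀ l₂, l₂ ≠ [] → l₂ <:+ l → 0 < l₂.sum}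

@[simp]
theorem staysPositive_nil : [] ∈ staysPositive :=
  fun _ hl hl₁ => (hl (List.eq_nil_of_suffix_nil hl₁)).elim

theorem staysPositive_suffix {l₁ l₂ : List ℤ} (hl₂ : l₂ ∈ staysPositive) (h : l₁ <:+ l₂) :
    l₁ ∈ staysPositive := fun l hne hl ↦ hl₂ l hne <| hl.trans h

theorem staysPositive_cons {x : ℤ} {l : List ℤ} :
    x::l ∈ staysPositive ↔ l ∈ staysPositive ∧ 0 < x + l.sum := by
  simp [staysPositive, List.suffix_cons_iff, or_imp, forall_and, @imp.swap _ (_ = _), and_comm]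

theorem sum_nonneg_of_staysPositive : ∀ {l : List ℤ}, l ∈ staysPositive → 0 ≤ l.sum
  | [], _ => le_rfl
  | (_::_), h => (h _ (List.cons_ne_nil _ _) List.suffix_rfl).le

theorem staysPositive_cons_pos (x : ℤ) (hx : 0 < x) (l : List ℤ) :
    (x::l) ∈ staysPositive ↔ l ∈ staysPositive := by
  rw [staysPositive_cons, and_iff_left_iff_imp]
  intro h
  have := sum_nonneg_of_staysPositive h
  positivity

/-- `countedSequence p q` is the set of lists of integers for which every element is `+1` or `-1`,
there are `p` lots of `+1` and `q` lots of `-1`.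

This represents vote sequences where candidate `+1` receives `p` votes and candidate `-1` receives
`q` votes.
-/
def countedSequence (p q : ℕ) : Set (List ℤ) :=
  {l | l.count 1 = p ∧ l.count (-1) = q ∧ ∀ x ∈ l, x = (1 : ℤ) ∨ x = -1}

open scoped List in
/-- An alternative definition of `countedSequence` that uses `List.Perm`. -/
theorem mem_countedSequence_iff_perm {p q l} :
    l ∈ countedSequence p q ↔ l ~ List.replicate p (1 : ℤ) ++ List.replicate q (-1) := by
  rw [List.perm_replicate_append_replicate]
  · simp only [countedSequence, List.subset_def, mem_setOf_eq, List.mem_cons (b := (1 : ℤ)),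
      List.mem_singleton]
  · norm_num1

@[simp]
theorem counted_right_zero (p : ℕ) : countedSequence p 0 = {List.replicate p 1} := by
  ext l; simp [mem_countedSequence_iff_perm]

@[simp]
theorem counted_left_zero (q : ℕ) : countedSequence 0 q = {List.replicate q (-1)} := by
  ext l; simp [mem_countedSequence_iff_perm]

theorem mem_of_mem_countedSequence {p q} {l} (hl : l ∈ countedSequence p q) {x : ℤ} (hx : x ∈ l) :
    x = 1 ∨ x = -1 :=
  hl.2.2 x hx

theorem length_of_mem_countedSequence {p q} {l : List ℤ} (hl : l ∈ countedSequence p q) :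
    l.length = p + q := by simp [(mem_countedSequence_iff_perm.1 hl).length_eq]

theorem counted_eq_nil_iff {p q : ℕ} {l : List ℤ} (hl : l ∈ countedSequence p q) :
    l = [] ↔ p = 0 ∧ q = 0 :=
  List.length_eq_zero_iff.symm.trans <| by simp [length_of_mem_countedSequence hl]

theorem counted_ne_nil_left {p q : ℕ} (hp : p ≠ 0) {l : List ℤ} (hl : l ∈ countedSequence p q) :
    l ≠ [] := by simp [counted_eq_nil_iff hl, hp]

theorem counted_ne_nil_right {p q : ℕ} (hq : q ≠ 0) {l : List ℤ} (hl : l ∈ countedSequence p q) :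
    l ≠ [] := by simp [counted_eq_nil_iff hl, hq]

theorem counted_succ_succ (p q : ℕ) :
    countedSequence (p + 1) (q + 1) =
      List.cons 1 '' countedSequence p (q + 1) ∪ List.cons (-1) '' countedSequence (p + 1) q := by
  ext l
  rw [countedSequence, countedSequence, countedSequence]
  constructor
  · intro hl
    have hlnil := counted_ne_nil_left (Nat.succ_ne_zero p) hl
    obtain ⟨hl₀, hl₁, hl₂⟩ := hl
    obtain hlast | hlast := hl₂ (l.head hlnil) (List.head_mem hlnil)
    · refine Or.inl ⟨l.tail, ⟨?_, ?_, ?_⟩, ?_⟩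
      · rw [List.count_tail, hl₀, List.head?_eq_head hlnil, hlast]; simp
      · rw [List.count_tail, hl₁, List.head?_eq_head hlnil, hlast]; simp
      · exact fun x hx => hl₂ x (List.mem_of_mem_tail hx)
      · rw [← hlast, List.cons_head_tail]
    · refine Or.inr ⟨l.tail, ⟨?_, ?_, ?_⟩, ?_⟩
      · rw [List.count_tail, hl₀, List.head?_eq_head hlnil, hlast]; simp
      · rw [List.count_tail, hl₁, List.head?_eq_head hlnil, hlast]; simp
      · exact fun x hx => hl₂ x (List.mem_of_mem_tail hx)
      · rw [← hlast, List.cons_head_tail]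
  · rintro (⟨t, ⟨ht₀, ht₁, ht₂⟩, rfl⟩ | ⟨t, ⟨ht₀, ht₁, ht₂⟩, rfl⟩)
    · refine ⟨?_, ?_, ?_⟩
      · rw [List.count_cons, beq_self_eq_true, if_pos rfl, ht₀]
      · rw [List.count_cons, if_neg, ht₁]
        norm_num
      · rintro x (_ | _)
        exacts [Or.inl rfl, ht₂ x (by tauto)]
    · refine ⟨?_, ?_, ?_⟩
      · rw [List.count_cons, if_neg, ht₀]
        norm_num
      · rw [List.count_cons, beq_self_eq_true, if_pos rfl, ht₁]
      · rintro x (_ | _)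
        exacts [Or.inr rfl, ht₂ x (by tauto)]

theorem countedSequence_finite : ∀ p q : ℕ, (countedSequence p q).Finite
  | 0, q => by simp
  | p + 1, 0 => by simp
  | p + 1, q + 1 => by
    rw [counted_succ_succ, Set.finite_union, Set.finite_image_iff List.cons_injective.injOn,
      Set.finite_image_iff List.cons_injective.injOn]
    exact ⟨countedSequence_finite _ _, countedSequence_finite _ _⟩

theorem countedSequence_nonempty : ∀ p q : ℕ, (countedSequence p q).Nonempty
  | 0, q => by simp
  | p + 1, 0 => by simp
  | p + 1, q + 1 => by
    rw [counted_succ_succ, union_nonempty, image_nonempty]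
    exact Or.inl (countedSequence_nonempty _ _)

theorem sum_of_mem_countedSequence {p q} {l : List ℤ} (hl : l ∈ countedSequence p q) :
    l.sum = p - q := by simp [(mem_countedSequence_iff_perm.1 hl).sum_eq, sub_eq_add_neg]

theorem disjoint_bits (p q : ℕ) :
    Disjoint (List.cons 1 '' countedSequence p (q + 1))
      (List.cons (-1) '' countedSequence (p + 1) q) := by
  simp_rw [disjoint_left, mem_image, not_exists, exists_imp]
  rintro _ _ ⟨_, rfl⟩ _ ⟨_, _, _⟩

open MeasureTheory.Measure

def measureableSpace_list_int : MeasurableSpace (List ℤ) := ⊤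

attribute [local instance] measureableSpace_list_int

theorem measurableSingletonClass_list_int : MeasurableSingletonClass (List ℤ) :=
  { measurableSet_singleton := fun _ => trivial }

attribute [local instance] measurableSingletonClass_list_int

theorem list_int_measurableSet {s : Set (List ℤ)} : MeasurableSet s := trivial

theorem count_countedSequence : ∀ p q : ℕ, count (countedSequence p q) = (p + q).choose p
  | p, 0 => by simp [counted_right_zero, count_singleton]
  | 0, q => by simp [counted_left_zero, count_singleton]
  | p + 1, q + 1 => by
    rw [counted_succ_succ, measure_union (disjoint_bits _ _) list_int_measurableSet,
      count_injective_image List.cons_injective, count_countedSequence _ _,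
      count_injective_image List.cons_injective, count_countedSequence _ _]
    norm_cast
    rw [add_assoc, add_comm 1 q, ← Nat.choose_succ_succ, Nat.succ_eq_add_one, add_right_comm]

theorem first_vote_pos :
    ∀ p q,
      0 < p + q → uniformOn (countedSequence p q : Set (List ℤ)) {l | l.headI = 1} = p / (p + q)
  | p + 1, 0, _ => by
    rw [counted_right_zero, uniformOn_singleton]
    simp [ENNReal.div_self _ _, List.replicate_succ]
  | 0, q + 1, _ => by
    rw [counted_left_zero, uniformOn_singleton]
    simp only [List.replicate, Nat.add_eq, add_zero, mem_setOf_eq, List.headI_cons, Nat.cast_zero,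
      ENNReal.zero_div, ite_eq_right_iff]
    decide
  | p + 1, q + 1, _ => by
    simp_rw [counted_succ_succ]
    rw [← uniformOn_disjoint_union ((countedSequence_finite _ _).image _)
        ((countedSequence_finite _ _).image _) (disjoint_bits _ _),
      ← counted_succ_succ,
      uniformOn_eq_one_of ((countedSequence_finite p (q + 1)).image _)
        ((countedSequence_nonempty _ _).image _)]
    · have : List.cons (-1) '' countedSequence (p + 1) q ∩ {l : List ℤ | l.headI = 1} = ∅ := by
        ext
        simp only [mem_inter_iff, mem_image, mem_setOf_eq, mem_empty_iff_false, iff_false,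
          not_and, forall_exists_index, and_imp]
        rintro l _ rfl
        norm_num
      have hint :
        countedSequence (p + 1) (q + 1) ∩ List.cons 1 '' countedSequence p (q + 1) =
          List.cons 1 '' countedSequence p (q + 1) := by
        rw [inter_eq_right, counted_succ_succ]
        exact subset_union_left
      rw [(uniformOn_eq_zero_iff <| (countedSequence_finite _ _).image _).2 this, uniformOn,
        cond_apply list_int_measurableSet, hint, count_injective_image List.cons_injective,
        count_countedSequence, count_countedSequence, one_mul, zero_mul, add_zero,
        Nat.cast_add, Nat.cast_one, mul_comm, ← div_eq_mul_inv, ENNReal.div_eq_div_iff]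
      · norm_cast
        rw [mul_comm _ (p + 1), ← Nat.succ_eq_add_one p, Nat.succ_add, Nat.add_one_mul_choose_eq,
          mul_comm]
      all_goals simp [(Nat.choose_pos <| le_add_of_nonneg_right zero_le').ne']
    · simp

theorem headI_mem_of_nonempty {α : Type*} [Inhabited α] : ∀ {l : List α} (_ : l ≠ []), l.headI ∈ l
  | [], h => (h rfl).elim
  | x::l, _ => List.mem_cons_self

theorem first_vote_neg (p q : ℕ) (h : 0 < p + q) :
    uniformOn (countedSequence p q) {l | l.headI = 1}ᶜ = q / (p + q) := by
  have h' : (p + q : ℝ≥0∞) ≠ 0 := mod_cast h.ne'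
  have := uniformOn_compl
    {l : List ℤ | l.headI = 1}ᶜ (countedSequence_finite p q) (countedSequence_nonempty p q)
  rw [compl_compl, first_vote_pos _ _ h] at this
  rw [ENNReal.eq_sub_of_add_eq _ this, ENNReal.eq_div_iff, ENNReal.mul_sub, mul_one,
    ENNReal.mul_div_cancel', ENNReal.add_sub_cancel_left]
  all_goals simp_all [ENNReal.div_eq_top]

theorem ballot_same (p : ℕ) : uniformOn (countedSequence (p + 1) (p + 1)) staysPositive = 0 := by
  rw [uniformOn_eq_zero_iff (countedSequence_finite _ _), eq_empty_iff_forall_notMem]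
  rintro x ⟨hx, t⟩
  apply ne_of_gt (t x _ x.suffix_refl)
  · simpa using sum_of_mem_countedSequence hx
  · refine List.ne_nil_of_length_pos ?_
    rw [length_of_mem_countedSequence hx]
    exact Nat.add_pos_left (Nat.succ_pos _) _

theorem ballot_edge (p : ℕ) : uniformOn (countedSequence (p + 1) 0) staysPositive = 1 := by
  rw [counted_right_zero]
  refine uniformOn_eq_one_of (finite_singleton _) (singleton_nonempty _) ?_
  refine singleton_subset_iff.2 fun l hl₁ hl₂ => List.sum_pos _ (fun x hx => ?_) hl₁
  rw [List.eq_of_mem_replicate (hl₂.mem hx)]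
  norm_num

theorem countedSequence_int_pos_counted_succ_succ (p q : ℕ) :
    countedSequence (p + 1) (q + 1) ∩ {l | l.headI = 1} =
      (countedSequence p (q + 1)).image (List.cons 1) := by
  rw [counted_succ_succ, union_inter_distrib_right,
      (_ : List.cons (-1) '' countedSequence (p + 1) q ∩ {l | l.headI = 1} = ∅), union_empty] <;>
    · ext
      simp only [mem_inter_iff, mem_image, mem_setOf_eq, and_iff_left_iff_imp, mem_empty_iff_false,
        iff_false, not_and, forall_exists_index, and_imp]
      rintro y _ rfl
      norm_num

theorem ballot_pos (p q : ℕ) :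
    uniformOn (countedSequence (p + 1) (q + 1) ∩ {l | l.headI = 1}) staysPositive =
      uniformOn (countedSequence p (q + 1)) staysPositive := by
  rw [countedSequence_int_pos_counted_succ_succ, uniformOn, uniformOn,
    cond_apply list_int_measurableSet, cond_apply list_int_measurableSet,
    count_injective_image List.cons_injective]
  congr 1
  have : (1 :: ·) '' countedSequence p (q + 1) ∩ staysPositive =
      (1 :: ·) '' (countedSequence p (q + 1) ∩ staysPositive) := by
    simp only [image_inter List.cons_injective, Set.ext_iff, mem_inter_iff, and_congr_right_iff,
      forall_mem_image, List.cons_injective.mem_set_image, staysPositive_cons_pos _ one_pos]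
    exact fun _ _ ↦ trivial
  rw [this, count_injective_image]
  exact List.cons_injective

theorem countedSequence_int_neg_counted_succ_succ (p q : ℕ) :
    countedSequence (p + 1) (q + 1) ∩ {l | l.headI = 1}ᶜ =
      (countedSequence (p + 1) q).image (List.cons (-1)) := by
  rw [counted_succ_succ, union_inter_distrib_right,
      (_ : List.cons 1 '' countedSequence p (q + 1) ∩ {l : List ℤ | l.headI = 1}ᶜ = ∅),
      empty_union] <;>
    · ext
      simp only [mem_inter_iff, mem_image, mem_setOf_eq, and_iff_left_iff_imp, mem_empty_iff_false,
        iff_false, not_and, forall_exists_index, and_imp]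
      rintro y _ rfl
      norm_num

theorem ballot_neg (p q : ℕ) (qp : q < p) :
    uniformOn (countedSequence (p + 1) (q + 1) ∩ {l | l.headI = 1}ᶜ) staysPositive =
      uniformOn (countedSequence (p + 1) q) staysPositive := by
  rw [countedSequence_int_neg_counted_succ_succ, uniformOn, uniformOn,
    cond_apply list_int_measurableSet, cond_apply list_int_measurableSet,
    count_injective_image List.cons_injective]
  congr 1
  have : List.cons (-1) '' countedSequence (p + 1) q ∩ staysPositive =
      List.cons (-1) '' (countedSequence (p + 1) q ∩ staysPositive) := by
    simp only [image_inter List.cons_injective, Set.ext_iff, mem_inter_iff, and_congr_right_iff,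
      forall_mem_image, List.cons_injective.mem_set_image, staysPositive_cons, and_iff_left_iff_imp]
    intro l hl _
    simp [sum_of_mem_countedSequence hl, lt_sub_iff_add_lt', qp]
  rw [this, count_injective_image]
  exact List.cons_injective

theorem ballot_problem' :
    ∀ q p, q < p → (uniformOn (countedSequence p q) staysPositive).toReal = (p - q) / (p + q) := by
  classical
  apply Nat.diag_induction
  · intro p
    rw [ballot_same]
    simp
  · intro p
    rw [ballot_edge]
    simp only [ENNReal.toReal_one, Nat.cast_add, Nat.cast_one, Nat.cast_zero, sub_zero, add_zero]
    rw [div_self]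
    exact Nat.cast_add_one_ne_zero p
  · intro q p qp h₁ h₂
    haveI := uniformOn_isProbabilityMeasure
      (countedSequence_finite p (q + 1)) (countedSequence_nonempty _ _)
    haveI := uniformOn_isProbabilityMeasure
      (countedSequence_finite (p + 1) q) (countedSequence_nonempty _ _)
    have h₃ : p + 1 + (q + 1) > 0 := Nat.add_pos_left (Nat.succ_pos _) _
    rw [← uniformOn_add_compl_eq {l : List ℤ | l.headI = 1} _ (countedSequence_finite _ _),
      first_vote_pos _ _ h₃, first_vote_neg _ _ h₃, ballot_pos, ballot_neg _ _ qp]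
    rw [ENNReal.toReal_add, ENNReal.toReal_mul, ENNReal.toReal_mul, ← Nat.cast_add,
      ENNReal.toReal_div, ENNReal.toReal_div, ENNReal.toReal_natCast, ENNReal.toReal_natCast,
      ENNReal.toReal_natCast, h₁, h₂]
    · have h₄ : (p + 1 : ℝ) + (q + 1 : ℝ) ≠ (0 : ℝ) := by
        apply ne_of_gt
        assumption_mod_cast
      have h₅ : (p + 1 : ℝ) + ↑q ≠ (0 : ℝ) := by
        apply ne_of_gt
        norm_cast
        linarith
      have h₆ : ↑p + (q + 1 : ℝ) ≠ (0 : ℝ) := by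
        apply ne_of_gt
        norm_cast
        linarith
      field_simp [h₄, h₅, h₆] at *
      push_cast
      ring
    all_goals exact ENNReal.mul_ne_top (measure_ne_top _ _) (by simp [Ne, ENNReal.div_eq_top])

/-- The ballot problem. -/
theorem ballot_problem :
    ∀ q p, q < p → uniformOn (countedSequence p q) staysPositive = (p - q) / (p + q) := by
  intro q p qp
  haveI :=
    uniformOn_isProbabilityMeasure (countedSequence_finite p q) (countedSequence_nonempty _ _)
  have :
    (uniformOn (countedSequence p q) staysPositive).toReal =
      ((p - q) / (p + q) : ℝ≥0∞).toReal := by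
    rw [ballot_problem' q p qp]
    rw [ENNReal.toReal_div, ← Nat.cast_add, ← Nat.cast_add, ENNReal.toReal_natCast,
      ENNReal.toReal_sub_of_le, ENNReal.toReal_natCast, ENNReal.toReal_natCast]
    exacts [Nat.cast_le.2 qp.le, ENNReal.natCast_ne_top _]
  rwa [ENNReal.toReal_eq_toReal_iff' (measure_lt_top _ _).ne] at this
  simp only [Ne, ENNReal.div_eq_top, tsub_eq_zero_iff_le, Nat.cast_le, not_le,
    add_eq_zero, Nat.cast_eq_zero, ENNReal.add_eq_top, ENNReal.natCast_ne_top, or_self_iff,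
    not_false_iff, and_true]
  push_neg
  exact ⟨fun _ _ => by linarith, (tsub_le_self.trans_lt (ENNReal.natCast_ne_top p).lt_top).ne⟩

end Ballot

section Helpers

open Finset

attribute [local instance] Ballot.measureableSpace_list_int Ballot.measurableSingletonClass_list_int

lemma card_filter_val_lt (n k : ℕ) (h : k ≤ n) :
    (Finset.univ.filter fun i : Fin n => (i : ℕ) < k).card = k := by
  have : (Finset.univ.filter fun i : Fin n => (i:ℕ) < k) =
      Finset.map (Fin.castLEEmb h) Finset.univ := by
    ext i
    simp only [Finset.mem_filter, Finset.mem_map, Finset.mem_univ, true_and, Fin.castLEEmb_apply]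
    constructor
    · intro hi; exact ⟨⟨i, hi⟩, by simp [Fin.ext_iff]⟩
    · rintro ⟨j, rfl⟩; simpa using j.isLt
  simp [this]

lemma count_ofFn (n : ℕ) (a : ℤ) (f : Fin n → ℤ) :
    (List.ofFn f).count a = (Finset.univ.filter fun i => f i = a).card := by
  induction n with
  | zero => simp
  | succ n ih =>
    rw [List.ofFn_succ, List.count_cons, ih, Fin.card_filter_univ_succ' (fun i => f i = a)]
    simp only [beq_iff_eq, Function.comp_def]
    by_cases h : f 0 = a
    · simp [h, Nat.add_comm]
    · simp [h, Nat.add_comm]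

variable {n : ℕ} (b : Fin n → ℝ)

/-- integer step sequence: `+1` on zeros of `b`, `-1` on ones of `b`. -/
noncomputable def stepOf : Fin n → ℤ := fun i => if b i = 1 then -1 else 1

/-- the list of steps induced by a permutation, in reverse order. -/
noncomputable def listOf (σ : Equiv.Perm (Fin n)) : List ℤ :=
  (List.ofFn (fun j => stepOf b (σ j))).reverse

/-- the number of ones in `b`. -/
noncomputable def onesOf : ℕ := (Finset.univ.filter fun i => b i = 1).card

lemma onesOf_le : onesOf b ≤ n := by
  simpa [onesOf] using Finset.card_filter_le Finset.univ (fun i => b i = 1)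

lemma card_filter_perm_comp (σ : Equiv.Perm (Fin n)) (P : Fin n → Prop) [DecidablePred P]
    [DecidablePred fun i => P (σ i)] :
    (Finset.univ.filter fun i => P (σ i)).card = (Finset.univ.filter fun i => P i).card := by
  classical
  apply Finset.card_bij (fun a _ => σ a)
  · intro a ha
    simp only [Finset.mem_filter, Finset.mem_univ, true_and] at ha ⊢
    exact ha
  · intro a _ a' _ h
    exact σ.injective h
  · intro c hc
    simp only [Finset.mem_filter, Finset.mem_univ, true_and] at hc
    exact ⟨σ.symm c, by simp [hc], by simp⟩

lemma card_step_neg : (Finset.univ.filter fun i => stepOf b i = -1).card = onesOf b := by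
  rw [onesOf]
  congr 1
  apply Finset.filter_congr
  intro i _
  unfold stepOf
  by_cases h : b i = 1 <;> simp [h]

lemma card_step_pos : (Finset.univ.filter fun i => stepOf b i = 1).card = n - onesOf b := by
  have h1 : (Finset.univ.filter fun i => stepOf b i = 1) =
      (Finset.univ.filter fun i => stepOf b i = -1)ᶜ := by
    ext i
    unfold stepOf
    by_cases h : b i = 1 <;> simp [h]
  rw [h1, Finset.card_compl, card_step_neg, Fintype.card_fin]

lemma listOf_mem_counted (σ : Equiv.Perm (Fin n)) :
    listOf b σ ∈ Ballot.countedSequence (n - onesOf b) (onesOf b) := by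
  refine ⟨?_, ?_, ?_⟩
  · rw [listOf, List.count_reverse, count_ofFn]
    have h1 := card_filter_perm_comp σ (fun i => stepOf b i = 1)
    have h2 := card_step_pos b
    rw [h1, h2]
  · rw [listOf, List.count_reverse, count_ofFn]
    have h1 := card_filter_perm_comp σ (fun i => stepOf b i = -1)
    have h2 := card_step_neg b
    rw [h1, h2]
  · intro z hz
    rw [listOf, List.mem_reverse, List.mem_ofFn] at hz
    obtain ⟨j, rfl⟩ := hz
    unfold stepOf
    by_cases h : b (σ j) = 1 <;> simp [h]

lemma staysPositive_iff (σ : Equiv.Perm (Fin n)) :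
    listOf b σ ∈ Ballot.staysPositive ↔
      ∀ k : ℕ, 1 ≤ k → k ≤ n →
        (0 : ℤ) < ∑ i ∈ Finset.univ.filter (fun i : Fin n => (i : ℕ) < k), stepOf b (σ i) := by
  constructor
  · intro h k hk1 hkn
    set l₂ := ((List.ofFn fun j => stepOf b (σ j)).take k).reverse with hl₂
    have hsuf : l₂ <:+ listOf b σ := by
      rw [listOf]
      exact List.reverse_suffix.mpr (List.take_prefix _ _)
    have hne : l₂ ≠ [] := by
      have : l₂.length = k := by
        rw [hl₂, List.length_reverse, List.length_take, List.length_ofFn]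
        omega
      intro hc
      rw [hc] at this
      simp at this
      omega
    have := h l₂ hne hsuf
    rwa [hl₂, List.sum_reverse, List.sum_take_ofFn] at this
  · intro h l₂ hne hsuf
    rw [listOf] at hsuf
    have hpre : l₂.reverse <+: List.ofFn (fun j => stepOf b (σ j)) := by
      rw [← List.reverse_reverse l₂] at hsuf
      exact List.reverse_suffix.mp hsuf
    have hk1 : 1 ≤ l₂.reverse.length := by
      rw [List.length_reverse]
      exact List.length_pos_iff.mpr hne
    have hkn : l₂.reverse.length ≤ n := by
      have := hpre.length_le
      simpa using this
    have heq : l₂.reverse = (List.ofFn (fun j => stepOf b (σ j))).take l₂.reverse.length :=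
      List.prefix_iff_eq_take.mp hpre
    set k := l₂.reverse.length with hk
    have hsum : l₂.sum = ∑ i ∈ Finset.univ.filter (fun i : Fin n => (i : ℕ) < k),
        stepOf b (σ i) := by
      rw [← List.sum_reverse, heq, List.sum_take_ofFn]
    rw [hsum]
    exact h _ hk1 hkn

lemma bad_iff_not_staysPositive (hb : ∀ i, b i = 0 ∨ b i = 1) (σ : Equiv.Perm (Fin n)) :
    (∃ k : ℕ, 1 ≤ k ∧ k ≤ n ∧
        (1/2 : ℝ) ≤ (1 / k : ℝ) * ∑ i : Fin n, (if (i : ℕ) < k then b (σ i) else 0)) ↔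
      ¬ (listOf b σ ∈ Ballot.staysPositive) := by
  rw [staysPositive_iff]
  push_neg
  constructor
  all_goals
    rintro ⟨k, hk1, hkn, hk⟩
    refine ⟨k, hk1, hkn, ?_⟩
    have hS : ∑ i : Fin n, (if (i : ℕ) < k then b (σ i) else 0) =
        ∑ i ∈ Finset.univ.filter (fun i : Fin n => (i : ℕ) < k), b (σ i) :=
      (Finset.sum_filter _ _).symm
    have hT : ((∑ i ∈ Finset.univ.filter (fun i : Fin n => (i : ℕ) < k), stepOf b (σ i) : ℤ) : ℝ)
        = (k : ℝ) - 2 * ∑ i ∈ Finset.univ.filter (fun i : Fin n => (i : ℕ) < k), b (σ i) := by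
      have hstep : ∀ i ∈ Finset.univ.filter (fun i : Fin n => (i : ℕ) < k),
          ((stepOf b (σ i) : ℤ) : ℝ) = 1 - 2 * b (σ i) := by
        intro i _
        unfold stepOf
        rcases hb (σ i) with h | h <;> simp [h] <;> norm_num
      calc ((∑ i ∈ Finset.univ.filter (fun i : Fin n => (i : ℕ) < k), stepOf b (σ i) : ℤ) : ℝ)
          = ∑ i ∈ Finset.univ.filter (fun i : Fin n => (i : ℕ) < k),
            ((stepOf b (σ i) : ℤ) : ℝ) := by push_cast; rfl
        _ = ∑ i ∈ Finset.univ.filter (fun i : Fin n => (i : ℕ) < k), (1 - 2 * b (σ i)) :=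
            Finset.sum_congr rfl hstep
        _ = ((Finset.univ.filter (fun i : Fin n => (i : ℕ) < k)).card : ℝ)
              - 2 * ∑ i ∈ Finset.univ.filter (fun i : Fin n => (i : ℕ) < k), b (σ i) := by
            rw [Finset.sum_sub_distrib, Finset.sum_const, nsmul_eq_mul, mul_one,
              ← Finset.mul_sum]
        _ = (k : ℝ) - 2 * ∑ i ∈ Finset.univ.filter (fun i : Fin n => (i : ℕ) < k), b (σ i) := by
            rw [card_filter_val_lt n k hkn]
    have hk0 : (0:ℝ) < k := by exact_mod_cast hk1
  · -- forward : bad k gives nonpositive sum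
    rw [hS] at hk
    rw [one_div_mul_eq_div, le_div_iff₀ hk0] at hk
    have hr : ((∑ i ∈ Finset.univ.filter (fun i : Fin n => (i : ℕ) < k),
        stepOf b (σ i) : ℤ) : ℝ) ≤ 0 := by rw [hT]; linarith
    exact_mod_cast hr
  · -- backward
    have hr : ((∑ i ∈ Finset.univ.filter (fun i : Fin n => (i : ℕ) < k),
        stepOf b (σ i) : ℤ) : ℝ) ≤ 0 := by exact_mod_cast hk
    rw [hT] at hr
    rw [hS, one_div_mul_eq_div, le_div_iff₀ hk0]
    linarith

lemma fiber_card (σ₀ : Equiv.Perm (Fin n)) :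
    (Finset.univ.filter fun σ => listOf b σ = listOf b σ₀).card =
      (onesOf b).factorial * (n - onesOf b).factorial := by
  classical
  set f' : Fin n → Bool := fun i => decide (b i = 1) with hf'
  -- rewrite the fiber condition
  have hLiff : ∀ σ : Equiv.Perm (Fin n),
      listOf b σ = listOf b σ₀ ↔ ∀ i, f' (σ i) = f' (σ₀ i) := by
    intro σ
    rw [listOf, listOf, List.reverse_inj, List.ofFn_inj, funext_iff]
    constructor
    · intro h i
      have := h i
      unfold stepOf at this
      by_cases h1 : b (σ i) = 1 <;> by_cases h2 : b (σ₀ i) = 1 <;>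
        simp [h1, h2, hf'] at this ⊢
    · intro h i
      have := h i
      unfold stepOf
      by_cases h1 : b (σ i) = 1 <;> by_cases h2 : b (σ₀ i) = 1 <;>
        simp [h1, h2, hf'] at this ⊢
  have hcard1 : (Finset.univ.filter fun σ => listOf b σ = listOf b σ₀).card =
      (Finset.univ.filter fun g : Equiv.Perm (Fin n) => f' ∘ g = f').card := by
    refine Finset.card_bij' (fun σ _ => σ₀.symm.trans σ) (fun g _ => σ₀.trans g) ?_ ?_ ?_ ?_
    · intro σ hσ
      simp only [Finset.mem_filter, Finset.mem_univ, true_and] at hσ ⊢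
      rw [hLiff] at hσ
      funext i
      simpa using hσ (σ₀.symm i)
    · intro g hg
      simp only [Finset.mem_filter, Finset.mem_univ, true_and] at hg ⊢
      rw [hLiff]
      intro i
      have := congrFun hg (σ₀ i)
      simpa using this
    · intro σ _; ext i; simp
    · intro g _; ext i; simp
  rw [hcard1]
  have hsub : (Finset.univ.filter fun g : Equiv.Perm (Fin n) => f' ∘ g = f').card =
      Fintype.card {g : Equiv.Perm (Fin n) // f' ∘ g = f'} := (Fintype.card_subtype _).symm
  rw [hsub, DomMulAct.stabilizer_card f', Fintype.prod_bool]
  have htrue : Fintype.card {a // f' a = true} = onesOf b := by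
    rw [Fintype.card_subtype, onesOf]
    congr 1
    apply Finset.filter_congr
    intro i _
    simp [hf']
  have hfalse : Fintype.card {a // f' a = false} = n - onesOf b := by
    have : Fintype.card {a // f' a = false} = Fintype.card {a // ¬ (f' a = true)} :=
      Fintype.card_congr (Equiv.subtypeEquivRight (by intro x; simp))
    rw [this, Fintype.card_subtype_compl, htrue, Fintype.card_fin]
  rw [htrue, hfalse]

lemma grouped_count (S : Set (List ℤ)) :
    (Finset.univ.filter fun σ : Equiv.Perm (Fin n) => listOf b σ ∈ S).card =
      (((Finset.univ.image (listOf b)).filter fun l => l ∈ S).card) *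
        ((onesOf b).factorial * (n - onesOf b).factorial) := by
  classical
  set A := Finset.univ.filter (fun σ : Equiv.Perm (Fin n) => listOf b σ ∈ S) with hA
  rw [Finset.card_eq_sum_card_image (listOf b) A]
  have h1 : ∀ l ∈ A.image (listOf b), (A.filter fun σ => listOf b σ = l).card =
      (onesOf b).factorial * (n - onesOf b).factorial := by
    intro l hl
    obtain ⟨σ₀, hσ₀A, rfl⟩ := Finset.mem_image.mp hl
    have hmemS : listOf b σ₀ ∈ S := by
      rw [hA] at hσ₀A
      simpa using hσ₀A
    have heq : A.filter (fun σ => listOf b σ = listOf b σ₀) =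
        Finset.univ.filter (fun σ => listOf b σ = listOf b σ₀) := by
      ext σ
      simp only [hA, Finset.mem_filter, Finset.mem_univ, true_and]
      constructor
      · rintro ⟨_, h⟩; exact h
      · intro h; exact ⟨h ▸ hmemS, h⟩
    rw [heq]
    exact fiber_card b σ₀
  rw [Finset.sum_congr rfl h1, Finset.sum_const, smul_eq_mul]
  congr 1
  apply Finset.card_bij (fun l _ => l)
  · intro l hl
    obtain ⟨σ, hσ, rfl⟩ := Finset.mem_image.mp hl
    rw [hA] at hσ
    simp only [Finset.mem_filter, Finset.mem_univ, true_and] at hσ ⊢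
    exact ⟨Finset.mem_image_of_mem _ (Finset.mem_univ σ), hσ⟩
  · intro _ _ _ _ h; exact h
  · intro l hl
    simp only [Finset.mem_filter, Finset.mem_image, Finset.mem_univ, true_and] at hl
    obtain ⟨⟨σ, _, rfl⟩, hS⟩ := hl
    refine ⟨listOf b σ, ?_, rfl⟩
    apply Finset.mem_image_of_mem
    rw [hA]
    simp [hS]

lemma image_listOf (hb : ∀ i, b i = 0 ∨ b i = 1) :
    Finset.univ.image (listOf b) =
      (Ballot.countedSequence_finite (n - onesOf b) (onesOf b)).toFinset := by
  classical
  apply Finset.Subset.antisymm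
  · intro l hl
    obtain ⟨σ, _, rfl⟩ := Finset.mem_image.mp hl
    rw [Set.Finite.mem_toFinset]
    exact listOf_mem_counted b σ
  · intro l hl
    rw [Set.Finite.mem_toFinset] at hl
    -- surjectivity: build a permutation realizing `l`
    have hlen : l.length = n := by
      rw [Ballot.length_of_mem_countedSequence hl]
      have := onesOf_le b
      omega
    have hrev : l.reverse.length = n := by rw [List.length_reverse, hlen]
    set d : Fin n → ℤ := fun j => l.reverse.get (Fin.cast hrev.symm j) with hd
    have hofd : List.ofFn d = l.reverse := by
      apply List.ext_get
      · simp [hrev]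
      · intro i h1 h2
        rw [List.get_ofFn]
        simp [hd]
    -- entries of d are ±1
    have hdpm : ∀ j, d j = 1 ∨ d j = -1 := by
      intro j
      apply Ballot.mem_of_mem_countedSequence hl
      rw [← List.mem_reverse, ← hofd]
      exact List.mem_ofFn.mpr ⟨j, rfl⟩
    -- counts
    have hcount1 : (Finset.univ.filter fun j => d j = 1).card = n - onesOf b := by
      have := count_ofFn n 1 d
      rw [hofd, List.count_reverse, hl.1] at this
      omega
    have hcountx : (Finset.univ.filter fun j => stepOf b j = 1).card = n - onesOf b :=
      card_step_pos b
    have e₁ : {j // d j = 1} ≃ {i // stepOf b i = 1} := by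
      apply Fintype.equivOfCardEq
      rw [Fintype.card_subtype, Fintype.card_subtype, hcount1, hcountx]
    have e₂ : {j // ¬ (d j = 1)} ≃ {i // ¬ (stepOf b i = 1)} := by
      apply Fintype.equivOfCardEq
      rw [Fintype.card_subtype_compl, Fintype.card_subtype_compl,
        Fintype.card_subtype, Fintype.card_subtype, hcount1, hcountx]
    set σ : Equiv.Perm (Fin n) :=
      ((Equiv.sumCompl (fun j => d j = 1)).symm.trans
        ((e₁.sumCongr e₂).trans (Equiv.sumCompl (fun i => stepOf b i = 1)))) with hσ
    have hstep : ∀ j, stepOf b (σ j) = d j := by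
      intro j
      by_cases h : d j = 1
      · have : σ j = (e₁ ⟨j, h⟩ : Fin n) := by
          rw [hσ]
          simp only [Equiv.trans_apply, Equiv.sumCongr_apply]
          rw [Equiv.sumCompl_symm_apply_of_pos (p := fun j => d j = 1) h]
          rw [Sum.map_inl, Equiv.sumCompl_apply_inl]
        rw [this, h]
        exact (e₁ ⟨j, h⟩).prop
      · have : σ j = (e₂ ⟨j, h⟩ : Fin n) := by
          rw [hσ]
          simp only [Equiv.trans_apply, Equiv.sumCongr_apply]
          rw [Equiv.sumCompl_symm_apply_of_neg (p := fun j => d j = 1) h]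
          rw [Sum.map_inr, Equiv.sumCompl_apply_inr]
        have hx : ¬ (stepOf b ((e₂ ⟨j, h⟩ : Fin n)) = 1) := (e₂ ⟨j, h⟩).prop
        have hd' : d j = -1 := (hdpm j).resolve_left h
        set y := ((e₂ ⟨j, h⟩ : Fin n)) with hy
        have hx' : stepOf b y = -1 := by
          by_cases hbb : b y = 1
          · show (if b y = 1 then (-1:ℤ) else 1) = -1
            rw [if_pos hbb]
          · exact (hx (show stepOf b y = 1 from by
              show (if b y = 1 then (-1:ℤ) else 1) = 1
              rw [if_neg hbb])).elim
        rw [this, hx', hd']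
    apply Finset.mem_image.mpr
    refine ⟨σ, Finset.mem_univ σ, ?_⟩
    rw [listOf]
    have : (fun j => stepOf b (σ j)) = d := funext hstep
    rw [this, hofd, List.reverse_reverse]

lemma bad_card_mul (hb : ∀ i, b i = 0 ∨ b i = 1) (hm : 2 * onesOf b < n) :
    (Finset.univ.filter fun σ : Equiv.Perm (Fin n) => ∃ k : ℕ, 1 ≤ k ∧ k ≤ n ∧
        (1/2 : ℝ) ≤ (1 / k : ℝ) * ∑ i : Fin n, (if (i : ℕ) < k then b (σ i) else 0)).card * n =
      2 * onesOf b * n.factorial := by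
  classical
  set q := onesOf b with hq
  set p := n - q with hp
  have hmn : q ≤ n := onesOf_le b
  have hqp : q < p := by omega
  have hpq : p + q = n := by omega
  -- ballot problem
  have hballot := Ballot.ballot_problem q p hqp
  rw [ProbabilityTheory.uniformOn, ProbabilityTheory.cond_apply Ballot.list_int_measurableSet]
    at hballot
  have hfin := Ballot.countedSequence_finite p q
  have hfin2 : (Ballot.countedSequence p q ∩ Ballot.staysPositive).Finite :=
    hfin.inter_of_left _
  set C := (p + q).choose p with hC
  set A := hfin2.toFinset.card with hAdef
  rw [Ballot.count_countedSequence p q, Measure.count_apply_finite _ hfin2] at hballot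
  -- extract the natural-number identity A * n = (p - q) * C
  have hC0 : (C : ℝ≥0∞) ≠ 0 := by
    simp only [hC, Ne, Nat.cast_eq_zero]
    exact (Nat.choose_pos (by omega)).ne'
  have hCT : (C : ℝ≥0∞) ≠ ⊤ := ENNReal.natCast_ne_top C
  have hn0 : ((p + q : ℕ) : ℝ≥0∞) ≠ 0 := by
    simp only [Ne, Nat.cast_eq_zero]; omega
  have hnT : ((p + q : ℕ) : ℝ≥0∞) ≠ ⊤ := ENNReal.natCast_ne_top _
  have h1 : (A : ℝ≥0∞) = ((p : ℝ≥0∞) - q) / ((p + q : ℕ) : ℝ≥0∞) * C := by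
    calc (A : ℝ≥0∞) = (C : ℝ≥0∞) * ((C : ℝ≥0∞)⁻¹ * A) := by
          rw [← mul_assoc, ENNReal.mul_inv_cancel hC0 hCT, one_mul]
      _ = (C : ℝ≥0∞) * (((p : ℝ≥0∞) - q) / ((p : ℝ≥0∞) + q)) := by rw [hballot]
      _ = ((p : ℝ≥0∞) - q) / ((p + q : ℕ) : ℝ≥0∞) * C := by
          rw [mul_comm]
          congr 1
          push_cast
          ring_nf
  have hAeq : ((A * (p + q) : ℕ) : ℝ≥0∞) = (((p - q) * C : ℕ) : ℝ≥0∞) := by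
    calc ((A * (p + q) : ℕ) : ℝ≥0∞) = (A : ℝ≥0∞) * ((p + q : ℕ) : ℝ≥0∞) := by push_cast; ring
      _ = (((p : ℝ≥0∞) - q) / ((p + q : ℕ) : ℝ≥0∞) * C) * ((p + q : ℕ) : ℝ≥0∞) := by rw [h1]
      _ = (((p : ℝ≥0∞) - q) / ((p + q : ℕ) : ℝ≥0∞) * ((p + q : ℕ) : ℝ≥0∞)) * C := by ring
      _ = ((p : ℝ≥0∞) - q) * C := by rw [ENNReal.div_mul_cancel hn0 hnT]
      _ = (((p - q) * C : ℕ) : ℝ≥0∞) := by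
          have hsub : ((p - q : ℕ) : ℝ≥0∞) = (p : ℝ≥0∞) - (q : ℝ≥0∞) := ENNReal.natCast_sub p q
          rw [Nat.cast_mul, hsub]
  have hAn : A * (p + q) = (p - q) * C := by exact_mod_cast hAeq
  -- relate A to the image count
  have himg : ((Finset.univ.image (listOf b)).filter
      fun l => l ∈ Ballot.staysPositive) = hfin2.toFinset := by
    rw [image_listOf b hb]
    try ext l
    try rw [Finset.mem_filter, Set.Finite.mem_toFinset, Set.Finite.mem_toFinset,
      Set.mem_inter_iff]
    try constructor
    all_goals try (rintro ⟨h1, h2⟩; exact ⟨h1, h2⟩)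
  -- the good count
  have hgood : (Finset.univ.filter fun σ : Equiv.Perm (Fin n) =>
      listOf b σ ∈ Ballot.staysPositive).card = A * (q.factorial * p.factorial) := by
    rw [grouped_count b Ballot.staysPositive, himg]
    try exact rfl
  -- choose * factorials = n!
  have hCK : C * (q.factorial * p.factorial) = n.factorial := by
    have := Nat.choose_mul_factorial_mul_factorial (show p ≤ p + q by omega)
    rw [hC]
    have hpqp : p + q - p = q := by omega
    rw [hpqp] at this
    calc (p + q).choose p * (q.factorial * p.factorial)
        = (p + q).choose p * p.factorial * q.factorial := by ring
      _ = (p + q).factorial := this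
      _ = n.factorial := by rw [hpq]
  -- the bad set is the complement of the good set
  have hcompl : (Finset.univ.filter fun σ : Equiv.Perm (Fin n) => ∃ k : ℕ, 1 ≤ k ∧ k ≤ n ∧
      (1/2 : ℝ) ≤ (1 / k : ℝ) * ∑ i : Fin n, (if (i : ℕ) < k then b (σ i) else 0)) =
      (Finset.univ.filter fun σ : Equiv.Perm (Fin n) =>
        listOf b σ ∈ Ballot.staysPositive)ᶜ := by
    ext σ
    simp only [Finset.mem_filter, Finset.mem_univ, true_and, Finset.mem_compl]
    rw [bad_iff_not_staysPositive b hb σ]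
  rw [hcompl, Finset.card_compl, Fintype.card_perm, Fintype.card_fin, hgood]
  -- now pure arithmetic
  have hgoodn : A * (q.factorial * p.factorial) * n = (p - q) * n.factorial := by
    calc A * (q.factorial * p.factorial) * n
        = (A * (p + q)) * (q.factorial * p.factorial) := by rw [hpq]; ring
      _ = ((p - q) * C) * (q.factorial * p.factorial) := by rw [hAn]
      _ = (p - q) * (C * (q.factorial * p.factorial)) := by ring
      _ = (p - q) * n.factorial := by rw [hCK]
  have hle : A * (q.factorial * p.factorial) ≤ n.factorial := by
    rw [hgood.symm]
    calc (Finset.univ.filter fun σ : Equiv.Perm (Fin n) =>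
          listOf b σ ∈ Ballot.staysPositive).card
        ≤ (Finset.univ : Finset (Equiv.Perm (Fin n))).card := Finset.card_le_card
          (Finset.filter_subset _ _)
      _ = n.factorial := by rw [Finset.card_univ, Fintype.card_perm, Fintype.card_fin]
  rw [Nat.sub_mul, hgoodn]
  have hfac : n.factorial * n - (p - q) * n.factorial = 2 * q * n.factorial := by
    have h2q : n - (p - q) = 2 * q := by omega
    rw [Nat.mul_comm n.factorial n, ← Nat.sub_mul, h2q]
  rw [hfac]

end Helpers

section Main

lemma measure_pi_mem {Ω : Type*} [MeasurableSpace Ω] (μ : Measure Ω) {n : ℕ}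
    (π : Ω → Equiv.Perm (Fin n))
    (hmeas : ∀ σ, MeasurableSet {ω | π ω = σ})
    (hunif : ∀ σ, μ {ω | π ω = σ} = ((n.factorial : ℝ≥0∞))⁻¹)
    (P : Finset (Equiv.Perm (Fin n))) :
    μ {ω | π ω ∈ P} = P.card * ((n.factorial : ℝ≥0∞))⁻¹ := by
  have hset : {ω | π ω ∈ P} = ⋃ σ ∈ P, {ω | π ω = σ} := by
    ext ω; simp
  rw [hset, measure_biUnion_finset ?_ (fun σ _ => hmeas σ)]
  · simp [hunif, Finset.sum_const, nsmul_eq_mul]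
  · intro a _ c _ hac
    rw [Function.onFun, Set.disjoint_left]
    rintro ω (h1 : π ω = a) (h2 : π ω = c)
    exact hac (h1 ▸ h2)

end Main

/-- Bernoulli variables obtained by a uniformly random permutation of a fixed binary
vector with empirical mean ≤ α are exchangeable, and the probability that some prefix
average reaches 1/2 is at most 2α. -/
theorem permuted_bernoulli_exchangeable {Ω : Type*} [MeasurableSpace Ω] (μ : Measure Ω)
    [IsProbabilityMeasure μ] (n : ℕ) (hn : 0 < n)
    (b : Fin n → ℝ) (hb : ∀ i, b i = 0 ∨ b i = 1)
    (α : ℝ) (hα : (1 / n : ℝ) * ∑ i, b i ≤ α)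
    (π : Ω → Equiv.Perm (Fin n))
    (hmeas : ∀ σ, MeasurableSet {ω | π ω = σ})
    (hunif : ∀ σ, μ {ω | π ω = σ} = ((n.factorial : ℝ≥0∞))⁻¹) :
    (∀ σ : Equiv.Perm (Fin n),
      μ.map (fun ω => fun k => b (π ω (σ k))) = μ.map (fun ω => fun k => b (π ω k))) ∧
    μ {ω | ∃ k : ℕ, 1 ≤ k ∧ k ≤ n ∧
        (1/2 : ℝ) ≤ (1 / k : ℝ) * ∑ i : Fin n, (if (i : ℕ) < k then b (π ω i) else 0)} ≤
      ENNReal.ofReal (2 * α) := by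
  -- measurability of the maps
  letI : MeasurableSpace (Equiv.Perm (Fin n)) := ⊤
  have hπ : Measurable π := by
    apply measurable_to_countable
    intro σ
    exact hmeas (π σ)
  have hF : ∀ σ : Equiv.Perm (Fin n),
      Measurable (fun ω => fun k => b (π ω (σ k))) := by
    intro σ
    exact (measurable_from_top (f := fun τ : Equiv.Perm (Fin n) => fun k => b (τ (σ k)))).comp hπ
  have hF1 : Measurable (fun ω => fun k => b (π ω k)) := hF 1
  -- sum of b equals number of ones
  have hsum : ∑ i, b i = onesOf b := by
    have hpt : ∀ i, b i = if b i = 1 then (1:ℝ) else 0 := fun i => by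
      rcases hb i with h | h <;> simp [h]
    calc ∑ i, b i = ∑ i, if b i = 1 then (1:ℝ) else 0 :=
          Finset.sum_congr rfl (fun i _ => hpt i)
      _ = ((Finset.univ.filter fun i => b i = 1).card : ℝ) := by rw [Finset.sum_boole]
      _ = (onesOf b : ℝ) := by rw [onesOf]
  have hmn : onesOf b ≤ n := onesOf_le b
  have hα0 : (onesOf b : ℝ) / n ≤ α := by
    rw [div_eq_inv_mul, ← one_div, ← hsum]; exact hα
  have hαnn : (0:ℝ) ≤ α := le_trans (by positivity) hα0
  constructor
  · -- exchangeability
    intro σ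
    refine Measure.ext fun s hs => ?_
    rw [Measure.map_apply (hF σ) hs, Measure.map_apply hF1 hs]
    have h1 : (fun ω => fun k => b (π ω (σ k))) ⁻¹' s =
        {ω | π ω ∈ Finset.univ.filter fun τ => (fun k => b (τ (σ k))) ∈ s} := by
      ext ω; simp
    have h2 : (fun ω => fun k => b (π ω k)) ⁻¹' s =
        {ω | π ω ∈ Finset.univ.filter fun τ => (fun k => b (τ k)) ∈ s} := by
      ext ω; simp
    rw [h1, h2, measure_pi_mem μ π hmeas hunif, measure_pi_mem μ π hmeas hunif]
    congr 2
    refine Finset.card_bij' (fun τ _ => σ.trans τ) (fun ρ _ => σ.symm.trans ρ) ?_ ?_ ?_ ?_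
    · intro τ hτ
      simp only [Finset.mem_filter, Finset.mem_univ, true_and] at hτ ⊢
      exact hτ
    · intro ρ hρ
      simp only [Finset.mem_filter, Finset.mem_univ, true_and] at hρ ⊢
      simpa using hρ
    · intro τ _; ext k; simp
    · intro ρ _; ext k; simp
  · -- the probability bound
    set BadF : Finset (Equiv.Perm (Fin n)) :=
      Finset.univ.filter (fun σ => ∃ k : ℕ, 1 ≤ k ∧ k ≤ n ∧
        (1/2 : ℝ) ≤ (1 / k : ℝ) * ∑ i : Fin n, (if (i : ℕ) < k then b (σ i) else 0)) with hBadF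
    have hEv : {ω | ∃ k : ℕ, 1 ≤ k ∧ k ≤ n ∧
        (1/2 : ℝ) ≤ (1 / k : ℝ) * ∑ i : Fin n, (if (i : ℕ) < k then b (π ω i) else 0)} =
        {ω | π ω ∈ BadF} := by
      ext ω; simp [hBadF]
    rw [hEv, measure_pi_mem μ π hmeas hunif]
    by_cases hm : 2 * onesOf b < n
    · -- main case: use the ballot count
      have hcount := bad_card_mul b hb hm
      rw [← hBadF] at hcount
      have hn0 : ((n:ℕ) : ℝ≥0∞) ≠ 0 := by
        simp only [Ne, Nat.cast_eq_zero]; omega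
      have hnT : ((n:ℕ) : ℝ≥0∞) ≠ ⊤ := ENNReal.natCast_ne_top _
      have hf0 : ((n.factorial : ℕ) : ℝ≥0∞) ≠ 0 := by
        simp only [Ne, Nat.cast_eq_zero]
        exact (Nat.factorial_pos n).ne'
      have hfT : ((n.factorial : ℕ) : ℝ≥0∞) ≠ ⊤ := ENNReal.natCast_ne_top _
      rw [← ENNReal.mul_le_mul_iff_left hn0 hnT]
      have hkey : (BadF.card : ℝ≥0∞) * ((n.factorial : ℝ≥0∞))⁻¹ * n =
          ((2 * onesOf b : ℕ) : ℝ≥0∞) := by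
        calc (BadF.card : ℝ≥0∞) * ((n.factorial : ℝ≥0∞))⁻¹ * n
            = ((BadF.card * n : ℕ) : ℝ≥0∞) * ((n.factorial : ℝ≥0∞))⁻¹ := by
              push_cast; ring
          _ = ((2 * onesOf b * n.factorial : ℕ) : ℝ≥0∞) * ((n.factorial : ℝ≥0∞))⁻¹ := by
              rw [hcount]
          _ = ((2 * onesOf b : ℕ) : ℝ≥0∞) * (((n.factorial : ℕ) : ℝ≥0∞) *
              ((n.factorial : ℝ≥0∞))⁻¹) := by push_cast; ring
          _ = ((2 * onesOf b : ℕ) : ℝ≥0∞) := by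
              rw [ENNReal.mul_inv_cancel hf0 hfT, mul_one]
      rw [hkey]
      calc ((2 * onesOf b : ℕ) : ℝ≥0∞) = ENNReal.ofReal ((2 * onesOf b : ℕ) : ℝ) :=
            (ENNReal.ofReal_natCast _).symm
        _ ≤ ENNReal.ofReal ((2 * α) * n) := by
            apply ENNReal.ofReal_le_ofReal
            have hn' : (0:ℝ) < n := by exact_mod_cast hn
            rw [div_le_iff₀ hn'] at hα0
            push_cast
            nlinarith
        _ = ENNReal.ofReal (2 * α) * ENNReal.ofReal (n : ℝ) := by
            rw [ENNReal.ofReal_mul (by linarith)]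
        _ = ENNReal.ofReal (2 * α) * ((n : ℕ) : ℝ≥0∞) := by
            rw [ENNReal.ofReal_natCast]
    · -- degenerate case: 2α ≥ 1
      have h2α : (1 : ℝ) ≤ 2 * α := by
        have hge : (n : ℝ) ≤ 2 * onesOf b := by exact_mod_cast Nat.le_of_not_lt hm
        have hn' : (0:ℝ) < n := by exact_mod_cast hn
        rw [div_le_iff₀ hn'] at hα0
        nlinarith
      calc (BadF.card : ℝ≥0∞) * ((n.factorial : ℝ≥0∞))⁻¹ ≤ μ Set.univ := by
            rw [← measure_pi_mem μ π hmeas hunif BadF]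
            exact measure_mono (Set.subset_univ _)
        _ = 1 := measure_univ
        _ ≤ ENNReal.ofReal (2 * α) := by
            rw [show (1:ℝ≥0∞) = ENNReal.ofReal 1 by simp]
            exact ENNReal.ofReal_le_ofReal h2α
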